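/- The Apéry sets of Γₙ satisfy: (1) Ap(Γₙ, 1) = Λ¹ ∪ Λ² ∪ ⋯ ∪ Λⁿ; (2) for every x with 1 < x < aₙ, Ap(Γₙ, x) = Λ¹ ∪ ⋯ ∪ Λⁿ ∪ {aₙbₙ+1, …, aₙbₙ+x−1}. -/

import Mathlib

/-- A numerical semigroup: an additive submonoid of ℕ with finite complement. -/
def IsNumericalSemigroup (Γ : Set ℕ) : Prop :=
  0 ∈ Γ ∧ (∀ x ∈ Γ, ∀ y ∈ Γ, x + y ∈ Γ) ∧ Γᶜ.Finite

/-- The Apéry set Ap(Γ,x) = {s ∈ Γ : s - x ∉ Γ}. -/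
def Ap (Γ : Set ℕ) (x : ℕ) : Set ℕ := {s ∈ Γ | ∀ t ∈ Γ, s ≠ t + x}

/-- The inductive numerical semigroups Γ₀ = ℕ, Γᵢ = aᵢ·Γ_{i-1} ∪ (aᵢbᵢ + ℕ). -/
def IndSG (a b : ℕ → ℕ) : ℕ → Set ℕ
  | 0 => Set.univ
  | i + 1 => (fun x => a (i + 1) * x) '' IndSG a b i ∪ {x | a (i + 1) * b (i + 1) ≤ x}

lemma mem_indSG_succ {a b : ℕ → ℕ} {i y : ℕ} :
    y ∈ IndSG a b (i + 1) ↔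
      (∃ t ∈ IndSG a b i, y = a (i + 1) * t) ∨ a (i + 1) * b (i + 1) ≤ y := by
  simp [IndSG, Set.mem_union, Set.mem_image, eq_comm]

lemma mem_indSG_of_le {a b : ℕ → ℕ} {i y : ℕ} (hi : 1 ≤ i) (h : a i * b i ≤ y) :
    y ∈ IndSG a b i := by
  obtain ⟨j, rfl⟩ : ∃ j, i = j + 1 := ⟨i - 1, by omega⟩
  exact Set.mem_union_right _ h

lemma mem_indSG_one {a b : ℕ → ℕ} {y : ℕ} :
    y ∈ IndSG a b 1 ↔ (∃ t, y = a 1 * t) ∨ a 1 * b 1 ≤ y := by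
  simpa [IndSG] using mem_indSG_succ (a := a) (b := b) (i := 0) (y := y)

lemma prod_Icc_bot {f : ℕ → ℕ} {k n : ℕ} (h1 : 1 ≤ k) (h2 : k ≤ n) :
    ∏ j ∈ Finset.Icc (k - 1) n, f j = f (k - 1) * ∏ j ∈ Finset.Icc k n, f j := by
  rw [← Finset.Ico_add_one_right_eq_Icc, Finset.prod_eq_prod_Ico_succ_bot (by omega)]
  rw [show k - 1 + 1 = k from by omega, Finset.Ico_add_one_right_eq_Icc]

lemma key {n : ℕ} {a b : ℕ → ℕ}
    (ha : ∀ i, 1 ≤ i → i ≤ n → 2 ≤ a i)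
    (hb : ∀ i, 1 ≤ i → i + 1 ≤ n → a i * b i ≤ b (i + 1)) :
    ∀ i, 1 ≤ i → i ≤ n → ∀ y,
      (y ∈ IndSG a b i ∧ y ≤ a i * b i) ↔
      ((∃ m, m ≤ b 1 ∧ y = m * ∏ j ∈ Finset.Icc 1 i, a j) ∨
       ∃ k, 2 ≤ k ∧ k ≤ i ∧ ∃ m, a (k - 1) * b (k - 1) ≤ m ∧ m ≤ b k ∧
         y = m * ∏ j ∈ Finset.Icc k i, a j) := by
  intro i hi1
  induction i, hi1 using Nat.le_induction with
  | base =>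
    intro hin y
    have ha1 : 2 ≤ a 1 := ha 1 le_rfl hin
    simp only [Finset.Icc_self, Finset.prod_singleton]
    constructor
    · rintro ⟨hy, hle⟩
      rcases mem_indSG_one.mp hy with ⟨t, rfl⟩ | hbig
      · exact Or.inl ⟨t, by
          constructor
          · by_contra hc
            have := Nat.mul_le_mul_left (a 1) (show b 1 + 1 ≤ t by omega)
            have : a 1 * (b 1 + 1) = a 1 * b 1 + a 1 := by ring
            omega
          · ring⟩
      · exact Or.inl ⟨b 1, le_rfl, by
          have : a 1 * b 1 = b 1 * a 1 := by ring
          omega⟩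
    · rintro (⟨m, hm, rfl⟩ | ⟨k, hk2, hk1, -⟩)
      · refine ⟨mem_indSG_one.mpr (Or.inl ⟨m, by ring⟩), ?_⟩
        rw [mul_comm]
        exact Nat.mul_le_mul_left _ hm
      · omega
  | succ i hi1 ih =>
    intro hin y
    have hiln : i ≤ n := by omega
    have hc2 : 2 ≤ a (i + 1) := ha (i + 1) (by omega) hin
    have hbb : a i * b i ≤ b (i + 1) := hb i hi1 hin
    constructor
    · rintro ⟨hy, hle⟩
      rcases mem_indSG_succ.mp hy with ⟨t, ht, rfl⟩ | hbig
      · have htle : t ≤ b (i + 1) := by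
          by_contra hc
          have := Nat.mul_le_mul_left (a (i + 1)) (show b (i + 1) + 1 ≤ t by omega)
          have : a (i + 1) * (b (i + 1) + 1) = a (i + 1) * b (i + 1) + a (i + 1) := by ring
          omega
        rcases le_or_gt t (a i * b i) with hts | hts
        · rcases (ih hiln t).mp ⟨ht, hts⟩ with ⟨m, hm, rfl⟩ | ⟨k, hk2, hki, m, hm1, hm2, rfl⟩
          · refine Or.inl ⟨m, hm, ?_⟩
            rw [Finset.prod_Icc_succ_top (by omega)]; ring
          · refine Or.inr ⟨k, hk2, by omega, m, hm1, hm2, ?_⟩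
            rw [Finset.prod_Icc_succ_top (by omega)]; ring
        · refine Or.inr ⟨i + 1, by omega, le_rfl, t, ?_, htle, ?_⟩
          · simp only [Nat.add_sub_cancel]; omega
          · simp only [Finset.Icc_self, Finset.prod_singleton]; ring
      · have : y = a (i + 1) * b (i + 1) := by omega
        refine Or.inr ⟨i + 1, by omega, le_rfl, b (i + 1), ?_, le_rfl, ?_⟩
        · simp only [Nat.add_sub_cancel]; exact hbb
        · simp only [Finset.Icc_self, Finset.prod_singleton]
          rw [this, mul_comm]
    · rintro (⟨m, hm, rfl⟩ | ⟨k, hk2, hki, m, hm1, hm2, rfl⟩)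
      · have ht : m * ∏ j ∈ Finset.Icc 1 i, a j ∈ IndSG a b i ∧
            m * ∏ j ∈ Finset.Icc 1 i, a j ≤ a i * b i :=
          (ih hiln _).mpr (Or.inl ⟨m, hm, rfl⟩)
        constructor
        · refine mem_indSG_succ.mpr (Or.inl ⟨_, ht.1, ?_⟩)
          rw [Finset.prod_Icc_succ_top (by omega)]; ring
        · rw [Finset.prod_Icc_succ_top (by omega)]
          calc m * ((∏ j ∈ Finset.Icc 1 i, a j) * a (i + 1))
              = (m * ∏ j ∈ Finset.Icc 1 i, a j) * a (i + 1) := by ring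
            _ ≤ (a i * b i) * a (i + 1) := Nat.mul_le_mul_right _ ht.2
            _ ≤ b (i + 1) * a (i + 1) := Nat.mul_le_mul_right _ hbb
            _ = a (i + 1) * b (i + 1) := by ring
      · rcases le_or_gt k i with hki' | hki'
        · have ht : m * ∏ j ∈ Finset.Icc k i, a j ∈ IndSG a b i ∧
              m * ∏ j ∈ Finset.Icc k i, a j ≤ a i * b i :=
            (ih hiln _).mpr (Or.inr ⟨k, hk2, hki', m, hm1, hm2, rfl⟩)
          constructor
          · refine mem_indSG_succ.mpr (Or.inl ⟨_, ht.1, ?_⟩)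
            rw [Finset.prod_Icc_succ_top (by omega)]; ring
          · rw [Finset.prod_Icc_succ_top (by omega)]
            calc m * ((∏ j ∈ Finset.Icc k i, a j) * a (i + 1))
                = (m * ∏ j ∈ Finset.Icc k i, a j) * a (i + 1) := by ring
              _ ≤ (a i * b i) * a (i + 1) := Nat.mul_le_mul_right _ ht.2
              _ ≤ b (i + 1) * a (i + 1) := Nat.mul_le_mul_right _ hbb
              _ = a (i + 1) * b (i + 1) := by ring
        · have hk : k = i + 1 := by omega
          subst hk
          simp only [Finset.Icc_self, Finset.prod_singleton]
          have hm1' : a i * b i ≤ m := by simpa using hm1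
          constructor
          · refine mem_indSG_succ.mpr (Or.inl ⟨m, mem_indSG_of_le hi1 ?_, by ring⟩)
            simpa using hm1'
          · calc m * a (i + 1) = a (i + 1) * m := by ring
              _ ≤ a (i + 1) * b (i + 1) := Nat.mul_le_mul_left _ hm2

lemma cascade {n : ℕ} {a b A lam : ℕ → ℕ} {Λ : ℕ → Set ℕ}
    (hb : ∀ i, 1 ≤ i → i + 1 ≤ n → a i * b i ≤ b (i + 1))
    (hA : ∀ i, A i = ∏ j ∈ Finset.Icc i n, a j)
    (hlam1 : lam 1 = b 1)
    (hlam : ∀ i, 2 ≤ i → i ≤ n → lam i = b i - a (i - 1) * b (i - 1))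
    (hΛ1 : Λ 1 = {x | ∃ m, m ≤ lam 1 ∧ x = m * A 1})
    (hΛk : ∀ k, 2 ≤ k → k ≤ n →
      Λ k = {x | ∃ m, 1 ≤ m ∧ m ≤ lam k ∧ x = b (k - 1) * A (k - 1) + m * A k}) :
    ∀ k, 1 ≤ k → k ≤ n → ∀ m, m ≤ b k → (2 ≤ k → a (k - 1) * b (k - 1) ≤ m) →
      ∃ k', 1 ≤ k' ∧ k' ≤ n ∧ (m * ∏ j ∈ Finset.Icc k n, a j) ∈ Λ k' := by
  intro k
  induction k using Nat.strong_induction_on with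
  | _ k ih =>
    intro hk1 hkn m hm hm2
    rcases Nat.lt_or_ge 1 k with hk2 | hk2'
    · have hk2 : 2 ≤ k := hk2
      have hcm := hm2 hk2
      rcases Nat.eq_or_lt_of_le hcm with heq | hlt
      · have hsplit := prod_Icc_bot (f := a) (show 1 ≤ k from hk1) hkn
        have hstep : m * ∏ j ∈ Finset.Icc k n, a j
            = b (k - 1) * ∏ j ∈ Finset.Icc (k - 1) n, a j := by
          rw [hsplit, ← heq]; ring
        rw [hstep]
        exact ih (k - 1) (by omega) (by omega) (by omega) (b (k - 1)) le_rfl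
          (fun h2 => by
            have h := hb (k - 2) (by omega) (by omega)
            simpa [show k - 2 + 1 = k - 1 from by omega,
              show k - 1 - 1 = k - 2 from by omega] using h)
      · refine ⟨k, by omega, hkn, ?_⟩
        rw [hΛk k hk2 hkn]
        simp only [Set.mem_setOf_eq]
        obtain ⟨m', hm'⟩ : ∃ m', m = a (k - 1) * b (k - 1) + m' :=
          ⟨m - a (k - 1) * b (k - 1), by omega⟩
        refine ⟨m - a (k - 1) * b (k - 1), by omega, ?_, ?_⟩
        · rw [hlam k hk2 hkn]; omega
        · rw [hA k, hA (k - 1), prod_Icc_bot hk1 hkn,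
            show m - a (k - 1) * b (k - 1) = m' from by omega, hm']
          ring
    · have hk : k = 1 := by omega
      subst hk
      exact ⟨1, le_rfl, hkn, by
        rw [hΛ1]
        exact ⟨m, by rw [hlam1]; exact hm, by rw [hA 1]⟩⟩

theorem stmt9 (n : ℕ) (hn : 1 ≤ n) (a b : ℕ → ℕ)
    (ha : ∀ i, 1 ≤ i → i ≤ n → 2 ≤ a i)
    (hb1 : 1 ≤ b 1)
    (hb : ∀ i, 1 ≤ i → i + 1 ≤ n → a i * b i ≤ b (i + 1))
    (A lam : ℕ → ℕ)
    (hA : ∀ i, A i = ∏ j ∈ Finset.Icc i n, a j)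
    (hlam1 : lam 1 = b 1)
    (hlam : ∀ i, 2 ≤ i → i ≤ n → lam i = b i - a (i - 1) * b (i - 1))
    (Λ : ℕ → Set ℕ)
    (hΛ1 : Λ 1 = {x | ∃ m, m ≤ lam 1 ∧ x = m * A 1})
    (hΛk : ∀ k, 2 ≤ k → k ≤ n →
      Λ k = {x | ∃ m, 1 ≤ m ∧ m ≤ lam k ∧ x = b (k - 1) * A (k - 1) + m * A k}) :
    Ap (IndSG a b n) 1 = {y | ∃ k, 1 ≤ k ∧ k ≤ n ∧ y ∈ Λ k}
    ∧ ∀ x, 1 < x → x < a n →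
        Ap (IndSG a b n) x
          = {y | ∃ k, 1 ≤ k ∧ k ≤ n ∧ y ∈ Λ k}
            ∪ {y | a n * b n + 1 ≤ y ∧ y ≤ a n * b n + x - 1} := by
  set T : Set ℕ := {y | ∃ k, 1 ≤ k ∧ k ≤ n ∧ y ∈ Λ k} with hT
  have han : 2 ≤ a n := ha n hn le_rfl
  have hTeq : T = {y | y ∈ IndSG a b n ∧ y ≤ a n * b n} := by
    ext y
    simp only [hT, Set.mem_setOf_eq]
    constructor
    · rintro ⟨k, hk1, hkn, hyk⟩
      rw [key ha hb n hn le_rfl y]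
      rcases Nat.lt_or_ge 1 k with hk2 | hk2'
      · have hk2 : 2 ≤ k := hk2
        rw [hΛk k hk2 hkn] at hyk
        simp only [Set.mem_setOf_eq] at hyk
        obtain ⟨m, hm1, hm2, rfl⟩ := hyk
        have hbk : a (k - 1) * b (k - 1) ≤ b k := by
          have h := hb (k - 1) (by omega) (by omega)
          simpa [show k - 1 + 1 = k from by omega] using h
        have hlamk := hlam k hk2 hkn
        refine Or.inr ⟨k, hk2, hkn, a (k - 1) * b (k - 1) + m, by omega, by omega, ?_⟩
        rw [hA k, hA (k - 1), prod_Icc_bot (by omega) hkn]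
        ring
      · have hk : k = 1 := by omega
        subst hk
        rw [hΛ1] at hyk
        simp only [Set.mem_setOf_eq] at hyk
        obtain ⟨m, hm, rfl⟩ := hyk
        rw [hlam1] at hm
        exact Or.inl ⟨m, hm, by rw [hA 1]⟩
    · intro hy
      rw [key ha hb n hn le_rfl y] at hy
      rcases hy with ⟨m, hm, rfl⟩ | ⟨k, hk2, hkn, m, hm1, hm2, rfl⟩
      · exact cascade hb hA hlam1 hlam hΛ1 hΛk 1 le_rfl hn m hm (by omega)
      · exact cascade hb hA hlam1 hlam hΛ1 hΛk k (by omega) hkn m hm2 (fun _ => hm1)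
  have apchar : ∀ x, 1 ≤ x → x < a n →
      Ap (IndSG a b n) x =
        T ∪ {s | a n * b n + 1 ≤ s ∧ s ≤ a n * b n + x - 1} := by
    intro x hx1 hx2
    obtain ⟨p, hp⟩ : ∃ p, n = p + 1 := ⟨n - 1, by omega⟩
    have hmem : ∀ y, y ∈ IndSG a b n ↔
        (∃ t ∈ IndSG a b p, y = a n * t) ∨ a n * b n ≤ y := by
      intro y; rw [hp]; exact mem_indSG_succ
    ext s
    rw [hTeq]
    simp only [Ap, Set.mem_setOf_eq, Set.mem_union]
    constructor
    · rintro ⟨hs, hAp⟩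
      by_cases hle : s ≤ a n * b n
      · exact Or.inl ⟨hs, hle⟩
      · refine Or.inr ⟨by omega, ?_⟩
        by_contra hgt
        push_neg at hgt
        exact hAp (s - x) (mem_indSG_of_le hn (by omega)) (by omega)
    · rintro (⟨hs, hle⟩ | ⟨h1, h2⟩)
      · refine ⟨hs, ?_⟩
        rintro t ht heq
        obtain ⟨v, hv⟩ : ∃ v, s = a n * v := by
          rcases (hmem s).mp hs with ⟨u, -, hu⟩ | hbig
          · exact ⟨u, hu⟩
          · exact ⟨b n, by omega⟩
        rcases (hmem t).mp ht with ⟨w, -, hw⟩ | htbig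
        · have h1 : a n * w < a n * v := by omega
          have hwlt : w < v := by
            rcases Nat.lt_or_ge w v with h | h
            · exact h
            · have := Nat.mul_le_mul_left (a n) h; omega
          have hle2 := Nat.mul_le_mul_left (a n) (show w + 1 ≤ v from hwlt)
          have he : a n * (w + 1) = a n * w + a n := by ring
          omega
        · omega
      · refine ⟨(hmem s).mpr (Or.inr (by omega)), ?_⟩
        rintro t ht heq
        rcases (hmem t).mp ht with ⟨w, -, hw⟩ | htbig
        · have he : a n * (w + 1) = a n * w + a n := by ring
          have hbw : b n < w + 1 := by
            rcases Nat.lt_or_ge (b n) (w + 1) with h | h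
            · exact h
            · have := Nat.mul_le_mul_left (a n) h; omega
          have hge : a n * b n ≤ a n * w := Nat.mul_le_mul_left _ (by omega)
          omega
        · omega
  constructor
  · rw [apchar 1 le_rfl (by omega)]
    ext y
    simp only [Set.mem_union, Set.mem_setOf_eq]
    constructor
    · rintro (h | h)
      · exact h
      · exfalso; omega
    · intro h
      exact Or.inl h
  · intro x hx1 hx2
    rw [apchar x (by omega) hx2]
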